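/- In a greedily constructed optimal list u* (where each slot's item maximizes the success rate at that slot given the previously placed items), the success rates are nonincreasing along the list: for all j ≤ l ≤ L, ν(j | u*) ≥ ν(l | u*). -/
import Mathlib


open Finset

/-- eq:auxineq: in a greedily constructed list, the success rates
are nonincreasing along the slots. -/
theorem greedy_success_rates_nonincreasing {M ι : Type*} [Fintype M]
    (φ : M → ℝ) (θ : ι → M → ℝ) (h : ι → M)
    (hθtopic : ∀ a m, m ≠ h a → θ a m = 0)
    (hφ : ∀ m, 0 ≤ φ m) (hθ0 : ∀ a m, 0 ≤ θ a m) (hθ1 : ∀ a m, θ a m ≤ 1)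
    (L : ℕ) (u : ℕ → ι)
    (hgreedy : ∀ l < L, ∀ k : ι,
      (∑ m, φ m * (θ k m * ∏ s ∈ range l, (1 - θ (u s) m)))
        ≤ ∑ m, φ m * (θ (u l) m * ∏ s ∈ range l, (1 - θ (u s) m))) :
    ∀ j l : ℕ, j ≤ l → l < L →
      (∑ m, φ m * (θ (u l) m * ∏ s ∈ range l, (1 - θ (u s) m)))
        ≤ ∑ m, φ m * (θ (u j) m * ∏ s ∈ range j, (1 - θ (u s) m)) := by
  intro j l hjl hlL
  have hstep : (∑ m, φ m * (θ (u l) m * ∏ s ∈ range l, (1 - θ (u s) m)))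
      ≤ ∑ m, φ m * (θ (u l) m * ∏ s ∈ range j, (1 - θ (u s) m)) := by
    apply Finset.sum_le_sum
    intro m _
    have hPnonneg : ∀ n : ℕ, (0:ℝ) ≤ ∏ s ∈ range n, (1 - θ (u s) m) := by
      intro n
      exact Finset.prod_nonneg fun s _ => by linarith [hθ1 (u s) m]
    have hsplit : (∏ s ∈ range l, (1 - θ (u s) m))
        = (∏ s ∈ range j, (1 - θ (u s) m)) * ∏ s ∈ Finset.Ico j l, (1 - θ (u s) m) := by
      simp only [Finset.range_eq_Ico]
      exact (Finset.prod_Ico_consecutive _ (Nat.zero_le j) hjl).symm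
    have hIco1 : (∏ s ∈ Finset.Ico j l, (1 - θ (u s) m)) ≤ 1 :=
      Finset.prod_le_one (fun s _ => by linarith [hθ1 (u s) m])
        (fun s _ => by linarith [hθ0 (u s) m])
    have hP : (∏ s ∈ range l, (1 - θ (u s) m)) ≤ ∏ s ∈ range j, (1 - θ (u s) m) := by
      rw [hsplit]
      calc (∏ s ∈ range j, (1 - θ (u s) m)) * ∏ s ∈ Finset.Ico j l, (1 - θ (u s) m)
          ≤ (∏ s ∈ range j, (1 - θ (u s) m)) * 1 :=
            mul_le_mul_of_nonneg_left hIco1 (hPnonneg j)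
        _ = _ := mul_one _
    have := mul_le_mul_of_nonneg_left hP (hθ0 (u l) m)
    exact mul_le_mul_of_nonneg_left this (hφ m)
  exact hstep.trans (hgreedy j (lt_of_le_of_lt hjl hlL) (u l))
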